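/- Correctness of forward-propagation: under well-formedness and acyclicity, the output map Reg' satisfies, for every variable v and word w: w ∈ L(Reg' v) if and only if w ∈ L(Reg v) and for every (v1, v2) ∈ Concat v there exist w1, w2 with w = w1 ++ w2, w1 ∈ L(Reg' v1), and w2 ∈ L(Reg' v2). -/

import Mathlib

open Classical

variable {V a : Type}

/-- Concatenation of two languages. -/
def langConcat (L1 L2 : Set (List a)) : Set (List a) :=
  {w | ∃ w1 w2, w = w1 ++ w2 ∧ w1 ∈ L1 ∧ w2 ∈ L2}

/-- Well-formedness of a string constraint `(S, Concat, Reg)`: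
`S` is finite and all variables mentioned by `Concat` lie in `S`
(`Reg` is a total map, so `dom Reg = S` is implicit). -/
def WfConstr (S : Set V) (Concat : V → Set (V × V))
    (_Reg : V → Set (List a)) : Prop :=
  S.Finite ∧ ∀ v, (Concat v ≠ ∅ → v ∈ S) ∧
    ∀ p ∈ Concat v, p.1 ∈ S ∧ p.2 ∈ S

/-- The acyclicity predicate: `l` is a list of disjoint layers covering `S`,
each variable's dependencies lying in strictly later layers. -/
def Acyclic (Concat : V → Set (V × V)) : Set V → List (Set V) → Prop
  | S, [] => S = ∅
  | S, s :: l' =>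
      S = s ∪ (⋃ t ∈ l', t) ∧
      Disjoint s (⋃ t ∈ l', t) ∧
      (∀ v ∈ s, ∀ p ∈ Concat v, p.1 ∈ (⋃ t ∈ l', t) ∧ p.2 ∈ (⋃ t ∈ l', t)) ∧
      Acyclic Concat (S \ s) l'

/-- The set of variables of `S` all of whose dependence variables lie in `R`. -/
def ReadySet (S : Set V) (Concat : V → Set (V × V)) (R : Set V) : Set V :=
  {v ∈ S | ∀ p ∈ Concat v, p.1 ∈ R ∧ p.2 ∈ R}

/-- Refine the regular constraints of the variables in `C` by propagating
their concatenation constraints. -/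
noncomputable def VarLang (C : Set V) (Concat : V → Set (V × V))
    (Reg : V → Set (List a)) : V → Set (List a) := fun v =>
  if v ∈ C then
    Reg v ∩ ⋂ p ∈ Concat v, langConcat (Reg p.1) (Reg p.2)
  else Reg v

/-- The forward-propagation loop, with fuel. -/
noncomputable def ForwardPropAux (Concat : V → Set (V × V)) :
    ℕ → Set V → Set V → (V → Set (List a)) → (V → Set (List a))
  | 0, _, _, Reg => Reg
  | n + 1, S, R, Reg =>
      if S = ∅ then Reg
      else
        let C := ReadySet S Concat R
        ForwardPropAux Concat n (S \ C) (R ∪ C) (VarLang C Concat Reg)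

/-- The forward-propagation algorithm. -/
noncomputable def ForwardProp (S : Set V) (Concat : V → Set (V × V))
    (Reg : V → Set (List a)) : V → Set (List a) :=
  ForwardPropAux Concat S.ncard S ∅ Reg

/-- Satisfiability of a string constraint by an assignment `μ`. -/
def SatStr (S : Set V) (Concat : V → Set (V × V))
    (Reg : V → Set (List a)) (μ : V → List a) : Prop :=
  (∀ v ∈ S, μ v ∈ Reg v) ∧
  ∀ v ∈ S, ∀ p ∈ Concat v, μ v = μ p.1 ++ μ p.2

lemma acyclic_mem (Concat : V → Set (V × V)) :
    ∀ (l : List (Set V)) (T : Set V), Acyclic Concat T l →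
      ∀ v ∈ T, ∀ p ∈ Concat v, p.1 ∈ T ∧ p.2 ∈ T := by
  intro l
  induction l with
  | nil =>
    intro T h v hv
    rw [show T = ∅ from h] at hv
    exact absurd hv (Set.notMem_empty v)
  | cons s l' ih =>
    intro T h v hv p hp
    obtain ⟨hT, hdisj, hdep, hrec⟩ := h
    have hTs : T \ s = ⋃ t ∈ l', t := by
      rw [hT]; ext x
      simp only [Set.mem_diff, Set.mem_union]
      constructor
      · rintro ⟨hx | hx, hxs⟩
        · exact absurd hx hxs
        · exact hx
      · intro hx
        exact ⟨Or.inr hx, fun hxs => Set.disjoint_left.mp hdisj hxs hx⟩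
    by_cases hvs : v ∈ s
    · have h1 := hdep v hvs p hp
      have e1 : p.1 ∈ T \ s := by rw [hTs]; exact h1.1
      have e2 : p.2 ∈ T \ s := by rw [hTs]; exact h1.2
      exact ⟨e1.1, e2.1⟩
    · have hv' : v ∈ T \ s := ⟨hv, hvs⟩
      have h1 := ih (T \ s) hrec v hv' p hp
      exact ⟨h1.1.1, h1.2.1⟩

lemma acyclic_rank (Concat : V → Set (V × V)) :
    ∀ (l : List (Set V)) (T : Set V), Acyclic Concat T l →
      ∃ rk : V → ℕ, ∀ v ∈ T, ∀ p ∈ Concat v, rk v < rk p.1 ∧ rk v < rk p.2 := by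
  intro l
  induction l with
  | nil =>
    intro T h
    refine ⟨fun _ => 0, fun v hv => ?_⟩
    rw [show T = ∅ from h] at hv
    exact absurd hv (Set.notMem_empty v)
  | cons s l' ih =>
    intro T h
    obtain ⟨hT, hdisj, hdep, hrec⟩ := h
    obtain ⟨rk', hrk'⟩ := ih (T \ s) hrec
    have hTs : T \ s = ⋃ t ∈ l', t := by
      rw [hT]; ext x
      simp only [Set.mem_diff, Set.mem_union]
      constructor
      · rintro ⟨hx | hx, hxs⟩
        · exact absurd hx hxs
        · exact hx
      · intro hx
        exact ⟨Or.inr hx, fun hxs => Set.disjoint_left.mp hdisj hxs hx⟩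
    refine ⟨fun v => if v ∈ s then 0 else rk' v + 1, ?_⟩
    intro v hv p hp
    by_cases hvs : v ∈ s
    · have h1 := hdep v hvs p hp
      have e1 : p.1 ∈ T \ s := by rw [hTs]; exact h1.1
      have e2 : p.2 ∈ T \ s := by rw [hTs]; exact h1.2
      simp only [if_pos hvs, if_neg e1.2, if_neg e2.2]
      omega
    · have hv' : v ∈ T \ s := ⟨hv, hvs⟩
      have hmem := acyclic_mem Concat l' (T \ s) hrec v hv' p hp
      have h1 := hrk' v hv' p hp
      simp only [if_neg hvs, if_neg hmem.1.2, if_neg hmem.2.2]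
      omega

/-- Terminal-case reasoning: if `S' = ∅` the output is `Regc` and correctness
follows from the invariants. -/
lemma terminal_correct (Concat : V → Set (V × V)) (Reg : V → Set (List a))
    (R : Set V) (Regc : V → Set (List a))
    (hI3 : ∀ v, v ∉ R → Regc v = Reg v)
    (hI5 : ∀ v, Concat v ≠ ∅ → v ∈ R)
    (hI6 : ∀ v ∈ R, ∀ w, w ∈ Regc v ↔ w ∈ Reg v ∧ ∀ p ∈ Concat v,
        ∃ w1 w2, w = w1 ++ w2 ∧ w1 ∈ Regc p.1 ∧ w2 ∈ Regc p.2) :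
    ∀ (v : V) (w : List a),
      w ∈ Regc v ↔ (w ∈ Reg v ∧ ∀ p ∈ Concat v,
        ∃ w1 w2, w = w1 ++ w2 ∧ w1 ∈ Regc p.1 ∧ w2 ∈ Regc p.2) := by
  intro v w
  by_cases hvR : v ∈ R
  · exact hI6 v hvR w
  · have hc : Concat v = ∅ := by
      by_contra hne
      exact hvR (hI5 v hne)
    rw [hI3 v hvR, hc]
    simp

lemma forwardPropAux_correct (S : Set V) (Concat : V → Set (V × V))
    (Reg : V → Set (List a)) (hSfin : S.Finite) (rk : V → ℕ)
    (hrk : ∀ v ∈ S, ∀ p ∈ Concat v, rk v < rk p.1 ∧ rk v < rk p.2) :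
    ∀ (n : ℕ) (S' R : Set V) (Regc : V → Set (List a)),
      S' ⊆ S → S'.ncard ≤ n →
      (∀ v ∈ S', ∀ p ∈ Concat v, p.1 ∈ R ∪ S' ∧ p.2 ∈ R ∪ S') →
      (∀ v ∈ R, ∀ p ∈ Concat v, p.1 ∈ R ∧ p.2 ∈ R) →
      (∀ v, v ∉ R → Regc v = Reg v) →
      Disjoint R S' →
      (∀ v, Concat v ≠ ∅ → v ∈ R ∪ S') →
      (∀ v ∈ R, ∀ w, w ∈ Regc v ↔ w ∈ Reg v ∧ ∀ p ∈ Concat v,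
          ∃ w1 w2, w = w1 ++ w2 ∧ w1 ∈ Regc p.1 ∧ w2 ∈ Regc p.2) →
      ∀ (v : V) (w : List a),
        w ∈ ForwardPropAux Concat n S' R Regc v ↔
          (w ∈ Reg v ∧ ∀ p ∈ Concat v, ∃ w1 w2, w = w1 ++ w2 ∧
            w1 ∈ ForwardPropAux Concat n S' R Regc p.1 ∧
            w2 ∈ ForwardPropAux Concat n S' R Regc p.2) := by
  intro n
  induction n with
  | zero =>
    intro S' R Regc hsub hfuel hI1 hI2 hI3 hdisj hI5 hI6
    have hS' : S' = ∅ := by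
      have := Set.ncard_eq_zero (hSfin.subset hsub) |>.mp (Nat.le_zero.mp hfuel)
      exact this
    simp only [ForwardPropAux]
    refine terminal_correct Concat Reg R Regc hI3 ?_ hI6
    intro v hne
    have := hI5 v hne
    rw [hS'] at this
    simpa using this
  | succ n ih =>
    intro S' R Regc hsub hfuel hI1 hI2 hI3 hdisj hI5 hI6
    by_cases hS : S' = ∅
    · simp only [ForwardPropAux, if_pos hS]
      refine terminal_correct Concat Reg R Regc hI3 ?_ hI6
      intro v hne
      have := hI5 v hne
      rw [hS] at this
      simpa using this
    · simp only [ForwardPropAux, if_neg hS]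
      set C := ReadySet S' Concat R with hCdef
      have hS'fin : S'.Finite := hSfin.subset hsub
      obtain ⟨v0, hv0, hmax⟩ : ∃ v0 ∈ S', ∀ a' ∈ S', rk v0 ≤ rk a' → rk v0 = rk a' := by
        obtain ⟨v0, hv0, hm⟩ :=
          Set.Finite.exists_maximalFor rk S' hS'fin (Set.nonempty_iff_ne_empty.mpr hS)
        exact ⟨v0, hv0, fun a' ha h => le_antisymm h (hm ha h)⟩
      have hv0C : v0 ∈ C := by
        refine ⟨hv0, fun p hp => ?_⟩
        have h1 := hI1 v0 hv0 p hp
        have h2 := hrk v0 (hsub hv0) p hp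
        constructor
        · rcases h1.1 with h | h
          · exact h
          · exact absurd (hmax p.1 h h2.1.le) (Nat.ne_of_lt h2.1)
        · rcases h1.2 with h | h
          · exact h
          · exact absurd (hmax p.2 h h2.2.le) (Nat.ne_of_lt h2.2)
      have hCsub : C ⊆ S' := fun x hx => hx.1
      have hCR : ∀ v ∈ C, ∀ p ∈ Concat v, p.1 ∈ R ∧ p.2 ∈ R := fun v hv => hv.2
      have hssub : S' \ C ⊂ S' :=
        (Set.ssubset_iff_of_subset Set.diff_subset).mpr
          ⟨v0, hCsub hv0C, fun h => h.2 hv0C⟩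
      have hfuel' : (S' \ C).ncard ≤ n := by
        have := Set.ncard_lt_ncard hssub hS'fin
        omega
      have hCnotR : ∀ v ∈ C, v ∉ R := fun v hv hvR =>
        Set.disjoint_left.mp hdisj hvR (hCsub hv)
      set Regc' := VarLang C Concat Regc with hRegc'
      have hfix : ∀ u ∈ R, Regc' u = Regc u := by
        intro u hu
        have : u ∉ C := fun h => hCnotR u h hu
        simp [hRegc', VarLang, if_neg this]
      -- new invariants
      have hI2' : ∀ v ∈ R ∪ C, ∀ p ∈ Concat v, p.1 ∈ R ∪ C ∧ p.2 ∈ R ∪ C := by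
        intro v hv p hp
        rcases hv with hv | hv
        · exact ⟨Or.inl (hI2 v hv p hp).1, Or.inl (hI2 v hv p hp).2⟩
        · exact ⟨Or.inl (hCR v hv p hp).1, Or.inl (hCR v hv p hp).2⟩
      have hI6' : ∀ v ∈ R ∪ C, ∀ w, w ∈ Regc' v ↔ w ∈ Reg v ∧ ∀ p ∈ Concat v,
          ∃ w1 w2, w = w1 ++ w2 ∧ w1 ∈ Regc' p.1 ∧ w2 ∈ Regc' p.2 := by
        intro v hv w
        rcases hv with hvR | hvC
        · rw [hfix v hvR, hI6 v hvR w]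
          constructor
          · rintro ⟨hw, hall⟩
            refine ⟨hw, fun p hp => ?_⟩
            obtain ⟨w1, w2, he, h1, h2⟩ := hall p hp
            exact ⟨w1, w2, he, by rw [hfix p.1 (hI2 v hvR p hp).1]; exact h1,
              by rw [hfix p.2 (hI2 v hvR p hp).2]; exact h2⟩
          · rintro ⟨hw, hall⟩
            refine ⟨hw, fun p hp => ?_⟩
            obtain ⟨w1, w2, he, h1, h2⟩ := hall p hp
            refine ⟨w1, w2, he, ?_, ?_⟩
            · rw [hfix p.1 (hI2 v hvR p hp).1] at h1; exact h1
            · rw [hfix p.2 (hI2 v hvR p hp).2] at h2; exact h2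
        · have hvnR : v ∉ R := hCnotR v hvC
          have : Regc' v = Regc v ∩ ⋂ p ∈ Concat v, langConcat (Regc p.1) (Regc p.2) := by
            simp [hRegc', VarLang, if_pos hvC]
          rw [this, hI3 v hvnR]
          simp only [Set.mem_inter_iff, Set.mem_iInter]
          constructor
          · rintro ⟨hw, hall⟩
            refine ⟨hw, fun p hp => ?_⟩
            obtain ⟨w1, w2, he, h1, h2⟩ := hall p hp
            exact ⟨w1, w2, he, by rw [hfix p.1 (hCR v hvC p hp).1]; exact h1,
              by rw [hfix p.2 (hCR v hvC p hp).2]; exact h2⟩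
          · rintro ⟨hw, hall⟩
            refine ⟨hw, fun p hp => ?_⟩
            obtain ⟨w1, w2, he, h1, h2⟩ := hall p hp
            refine ⟨w1, w2, he, ?_, ?_⟩
            · rw [hfix p.1 (hCR v hvC p hp).1] at h1; exact h1
            · rw [hfix p.2 (hCR v hvC p hp).2] at h2; exact h2
      refine ih (S' \ C) (R ∪ C) Regc' (Set.diff_subset.trans hsub) hfuel' ?_ hI2' ?_ ?_ ?_ hI6'
      · intro v hv p hp
        have h1 := hI1 v hv.1 p hp
        have key : R ∪ S' = (R ∪ C) ∪ (S' \ C) := by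
          rw [Set.union_assoc, Set.union_diff_cancel hCsub]
        constructor
        · rw [← key]; exact h1.1
        · rw [← key]; exact h1.2
      · intro v hv
        have hvnR : v ∉ R := fun h => hv (Or.inl h)
        have hvnC : v ∉ C := fun h => hv (Or.inr h)
        rw [show Regc' v = Regc v by simp [hRegc', VarLang, if_neg hvnC]]
        exact hI3 v hvnR
      · exact Set.disjoint_union_left.mpr
          ⟨hdisj.mono_right Set.diff_subset, Set.disjoint_sdiff_right⟩
      · intro v hne
        have := hI5 v hne
        rw [show R ∪ C ∪ (S' \ C) = R ∪ S' by
          rw [Set.union_assoc, Set.union_diff_cancel hCsub]]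
        exact this

/-- Correctness of forward-propagation (Theorem 1). -/
theorem forwardProp_correct {V a : Type}
    (S : Set V) (Concat : V → Set (V × V)) (Reg : V → Set (List a))
    (hwf : WfConstr S Concat Reg)
    (hacy : ∃ l, Acyclic Concat S l) :
    ∀ (v : V) (w : List a),
      w ∈ ForwardProp S Concat Reg v ↔
        (w ∈ Reg v ∧
          ∀ p ∈ Concat v, ∃ w1 w2, w = w1 ++ w2 ∧
            w1 ∈ ForwardProp S Concat Reg p.1 ∧
            w2 ∈ ForwardProp S Concat Reg p.2) := by
  
  obtain ⟨hSfin, hwf2⟩ := hwf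
  obtain ⟨l, hacy'⟩ := hacy
  obtain ⟨rk, hrk⟩ := acyclic_rank Concat l S hacy'
  intro v w
  have h := forwardPropAux_correct S Concat Reg hSfin rk hrk S.ncard S ∅ Reg
    (subset_refl S) le_rfl
    (fun v hv p hp => ⟨Or.inr ((hwf2 v).2 p hp).1, Or.inr ((hwf2 v).2 p hp).2⟩)
    (fun v hv => absurd hv (Set.notMem_empty v))
    (fun v _ => rfl)
    (by simp : Disjoint (∅ : Set V) S)
    (fun v hne => Or.inr ((hwf2 v).1 hne))
    (fun v hv => absurd hv (Set.notMem_empty v))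
    v w
  simpa [ForwardProp] using h
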